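/- Let λ_max ≥ λ₀ > λ > 0 and let j ∈ {1,…,p}. If either (a) Px̄^j = 0, or (b) sup_{θ ∈ A} |⟨θ, x̄^j⟩| < mλ, then every minimizer (β, c) ∈ ℝ^p × ℝ of LRP_λ satisfies β_j = 0. -/

import Mathlib

/-- The dual objective `g(θ) = (1/m) Σ_i [θ_i log θ_i + (1−θ_i) log(1−θ_i)]`. -/
noncomputable def g (m : ℕ) (θ : Fin m → ℝ) : ℝ :=
  (1 / (m : ℝ)) * ∑ i, (θ i * Real.log (θ i) + (1 - θ i) * Real.log (1 - θ i))

/-- The gradient of `g`, componentwise `(1/m) log(θ_i/(1−θ_i))`. -/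
noncomputable def gradg (m : ℕ) (θ : Fin m → ℝ) : Fin m → ℝ :=
  fun i => (1 / (m : ℝ)) * Real.log (θ i / (1 - θ i))
/-- The dual feasible set `F_λ`: componentwise in `(0,1)`, `|⟨θ, x̄^j⟩| ≤ mλ` for all
columns `x̄^j = X j`, and `⟨θ, b⟩ = 0`. -/
def Feas (m p : ℕ) (X : Fin p → Fin m → ℝ) (b : Fin m → ℝ) (lam : ℝ) :
    Set (Fin m → ℝ) :=
  {θ | (∀ i, 0 < θ i ∧ θ i < 1) ∧ (∀ j, |∑ i, θ i * X j i| ≤ (m : ℝ) * lam) ∧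
    ∑ i, θ i * b i = 0}
open scoped Classical in
/-- `m⁺ = #{i : b_i = 1}`. -/
noncomputable def mPlus (m : ℕ) (b : Fin m → ℝ) : ℕ :=
  (Finset.univ.filter (fun i => b i = 1)).card

open scoped Classical in
/-- `m⁻ = #{i : b_i = −1}`. -/
noncomputable def mMinus (m : ℕ) (b : Fin m → ℝ) : ℕ :=
  (Finset.univ.filter (fun i => b i = -1)).card

open scoped Classical in
/-- `θ_max`, with `(θ_max)_i = m⁻/m` if `b_i = 1` and `m⁺/m` if `b_i = −1`. -/
noncomputable def thetaMax (m : ℕ) (b : Fin m → ℝ) : Fin m → ℝ :=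
  fun i => if b i = 1 then (mMinus m b : ℝ) / m else (mPlus m b : ℝ) / m

/-- `λ_max = (1/m) max_j |⟨θ_max, x̄^j⟩|`. -/
noncomputable def lamMax (m p : ℕ) (X : Fin p → Fin m → ℝ) (b : Fin m → ℝ) : ℝ :=
  (1 / (m : ℝ)) * ⨆ j : Fin p, |∑ i, thetaMax m b i * X j i|
/-- `P`, the orthogonal projection onto the orthogonal complement of `b`:
`Pv = v − (⟨v,b⟩/‖b‖₂²) b`. -/
noncomputable def Pb (m : ℕ) (b : Fin m → ℝ) (v : Fin m → ℝ) : Fin m → ℝ :=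
  fun i => v i - ((∑ k, v k * b k) / (∑ k, (b k) ^ 2)) * b i
/-- The ℓ1-regularized logistic regression objective `LRP_λ`:
`(1/m) Σ_i log(1 + exp(−⟨β, x̄_i⟩ − b_i c)) + λ‖β‖₁`, where the rows are
`(x̄_i)_j = X j i`. -/
noncomputable def LRP (m p : ℕ) (X : Fin p → Fin m → ℝ) (b : Fin m → ℝ) (lam : ℝ)
    (β : Fin p → ℝ) (c : ℝ) : ℝ :=
  (1 / (m : ℝ)) * ∑ i, Real.log (1 + Real.exp (-(∑ j, β j * X j i) - b i * c))
    + lam * ∑ j, |β j|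

/-- Theorem 9 (Slores): for `λ_max ≥ λ₀ > λ > 0` and a feature `j`, if either
`Px̄^j = 0` or `sup_{θ ∈ A} |⟨θ, x̄^j⟩| < mλ`, then every minimizer `(β, c)` of
`LRP_λ` satisfies `β_j = 0`. -/

noncomputable def phi (s : ℝ) : ℝ := s * Real.log s + (1 - s) * Real.log (1 - s)

lemma phi_hasDerivAt {s : ℝ} (h0 : 0 < s) (h1 : s < 1) :
    HasDerivAt phi (Real.log s - Real.log (1 - s)) s := by
  have h1' : (0:ℝ) < 1 - s := by linarith
  have d1 : HasDerivAt (fun t : ℝ => t * Real.log t) (Real.log s + 1) s :=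
    Real.hasDerivAt_mul_log h0.ne'
  have d2 : HasDerivAt (fun t : ℝ => (1 - t) * Real.log (1 - t))
      ((Real.log (1 - s) + 1) * (-1)) s := by
    have inner : HasDerivAt (fun t : ℝ => 1 - t) (-1) s := by
      simpa using (hasDerivAt_const s (1:ℝ)).fun_sub (hasDerivAt_id s)
    exact (Real.hasDerivAt_mul_log h1'.ne').comp s inner
  have := d1.fun_add d2
  refine this.congr_deriv ?_
  ring

lemma G_mono : MonotoneOn (fun u : ℝ => Real.log u - Real.log (1 - u) - 4 * u)
    (Set.Ioo (0:ℝ) 1) := by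
  have hderiv : ∀ u ∈ Set.Ioo (0:ℝ) 1,
      HasDerivAt (fun u : ℝ => Real.log u - Real.log (1 - u) - 4 * u)
        (u⁻¹ + (1 - u)⁻¹ - 4) u := by
    intro u hu
    have hu0 : (0:ℝ) < u := hu.1
    have hu1 : (0:ℝ) < 1 - u := by linarith [hu.2]
    have d1 : HasDerivAt Real.log u⁻¹ u := Real.hasDerivAt_log hu0.ne'
    have inner : HasDerivAt (fun t : ℝ => 1 - t) (-1) u := by
      simpa using (hasDerivAt_const u (1:ℝ)).fun_sub (hasDerivAt_id u)
    have d2 : HasDerivAt (fun t : ℝ => Real.log (1 - t)) ((1-u)⁻¹ * (-1)) u :=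
      (Real.hasDerivAt_log hu1.ne').comp u inner
    have d3 : HasDerivAt (fun t : ℝ => 4 * t) 4 u := by
      simpa using (hasDerivAt_id u).const_mul (4:ℝ)
    refine ((d1.fun_sub d2).fun_sub d3).congr_deriv ?_
    ring
  apply monotoneOn_of_deriv_nonneg (convex_Ioo 0 1)
  · exact fun u hu => ((hderiv u hu).differentiableAt).continuousAt.continuousWithinAt
  · intro u hu
    rw [interior_Ioo] at hu
    exact ((hderiv u hu).differentiableAt).differentiableWithinAt
  · intro u hu
    rw [interior_Ioo] at hu
    rw [(hderiv u hu).deriv]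
    have hu0 : (0:ℝ) < u := hu.1
    have hu1 : (0:ℝ) < 1 - u := by linarith [hu.2]
    have h4 : 4 * (u * (1 - u)) ≤ 1 := by nlinarith [sq_nonneg (2*u - 1)]
    have hle : (4:ℝ) ≤ 1 / (u * (1-u)) :=
      (le_div_iff₀ (mul_pos hu0 hu1)).mpr (by linarith)
    have heq : u⁻¹ + (1-u)⁻¹ = 1 / (u * (1-u)) := by
      field_simp; ring
    linarith

lemma pinsker {s t : ℝ} (hs0 : 0 < s) (hs1 : s < 1) (ht0 : 0 < t) (ht1 : t < 1) :
    phi s + (Real.log s - Real.log (1 - s)) * (t - s) + 2 * (t - s)^2 ≤ phi t := by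
  set L : ℝ := Real.log s - Real.log (1 - s) with hL
  set F : ℝ → ℝ := fun u => phi u - phi s - L * (u - s) - 2 * (u - s)^2 with hF
  have hFd : ∀ u ∈ Set.Ioo (0:ℝ) 1,
      HasDerivAt F ((Real.log u - Real.log (1 - u) - 4 * u) - (L - 4 * s)) u := by
    intro u hu
    have d1 := phi_hasDerivAt hu.1 (by linarith [hu.2] : u < 1)
    have d2 : HasDerivAt (fun v : ℝ => phi s + L * (v - s) + 2 * (v - s)^2)
        (L + 4 * (u - s)) u := by
      have e1 : HasDerivAt (fun v : ℝ => v - s) 1 u := by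
        simpa using (hasDerivAt_id u).fun_sub (hasDerivAt_const u s)
      have e2 : HasDerivAt (fun v : ℝ => L * (v - s)) L u := by
        simpa using e1.const_mul L
      have e3 : HasDerivAt (fun v : ℝ => 2 * (v - s)^2) (4 * (u - s)) u := by
        have := (e1.fun_pow 2).const_mul (2:ℝ)
        refine this.congr_deriv ?_
        ring
      simpa using ((hasDerivAt_const u (phi s)).fun_add e2).fun_add e3
    have := d1.fun_sub d2
    convert this using 1
    · rfl
    · rfl
    · funext v; simp [hF]; ring
    · ring
  have hFs : F s = 0 := by simp [hF]
  have key : ∀ u ∈ Set.Ioo (0:ℝ) 1, (0:ℝ) ≤ F u := by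
    intro u hu
    rcases le_total s u with hsu | hus
    · -- monotone on Ico s 1
      have hmono : MonotoneOn F (Set.Ico s 1) := by
        apply monotoneOn_of_deriv_nonneg (convex_Ico s 1)
        · intro v hv
          have hv' : v ∈ Set.Ioo (0:ℝ) 1 := ⟨lt_of_lt_of_le hs0 hv.1, hv.2⟩
          exact ((hFd v hv').differentiableAt).continuousAt.continuousWithinAt
        · intro v hv
          rw [interior_Ico] at hv
          have hv' : v ∈ Set.Ioo (0:ℝ) 1 := ⟨lt_trans hs0 hv.1, hv.2⟩
          exact ((hFd v hv').differentiableAt).differentiableWithinAt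
        · intro v hv
          rw [interior_Ico] at hv
          have hv' : v ∈ Set.Ioo (0:ℝ) 1 := ⟨lt_trans hs0 hv.1, hv.2⟩
          rw [(hFd v hv').deriv]
          have := G_mono ⟨hs0, hs1⟩ hv' (le_of_lt hv.1)
          simp only at this
          simp only [hL]
          linarith [this]
      have := hmono ⟨le_refl s, hs1⟩ ⟨hsu, hu.2⟩ hsu
      linarith [hFs ▸ this]
    · -- antitone on Ioc 0 s
      have hanti : AntitoneOn F (Set.Ioc 0 s) := by
        apply antitoneOn_of_deriv_nonpos (convex_Ioc 0 s)
        · intro v hv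
          have hv' : v ∈ Set.Ioo (0:ℝ) 1 := ⟨hv.1, lt_of_le_of_lt hv.2 hs1⟩
          exact ((hFd v hv').differentiableAt).continuousAt.continuousWithinAt
        · intro v hv
          rw [interior_Ioc] at hv
          have hv' : v ∈ Set.Ioo (0:ℝ) 1 := ⟨hv.1, lt_trans hv.2 hs1⟩
          exact ((hFd v hv').differentiableAt).differentiableWithinAt
        · intro v hv
          rw [interior_Ioc] at hv
          have hv' : v ∈ Set.Ioo (0:ℝ) 1 := ⟨hv.1, lt_trans hv.2 hs1⟩
          rw [(hFd v hv').deriv]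
          have := G_mono hv' ⟨hs0, hs1⟩ (le_of_lt hv.2)
          simp only at this
          simp only [hL]
          linarith [this]
      have := hanti ⟨hu.1, hus⟩ ⟨hs0, le_refl s⟩ hus
      linarith [hFs ▸ this]
  have := key t ⟨ht0, ht1⟩
  simp only [hF] at this
  linarith

lemma g_strong_lb (m : ℕ) (hm : 0 < m) (θ η : Fin m → ℝ)
    (hθ : ∀ i, 0 < θ i ∧ θ i < 1) (hη : ∀ i, 0 < η i ∧ η i < 1) :
    g m η + ∑ i, gradg m η i * (θ i - η i) + (2 / (m:ℝ)) * ∑ i, (θ i - η i)^2 ≤ g m θ := by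
  have hmR : (0:ℝ) < m := by exact_mod_cast hm
  have key : ∀ i : Fin m,
      phi (η i) + (Real.log (η i) - Real.log (1 - η i)) * (θ i - η i) + 2 * (θ i - η i)^2
        ≤ phi (θ i) := fun i =>
    pinsker (hη i).1 (hη i).2 (hθ i).1 (hθ i).2
  have hsum := Finset.sum_le_sum (fun i (_ : i ∈ Finset.univ) => key i)
  rw [Finset.sum_add_distrib, Finset.sum_add_distrib] at hsum
  have hgrad : ∀ i : Fin m, gradg m η i * (θ i - η i)
      = (1 / (m:ℝ)) * ((Real.log (η i) - Real.log (1 - η i)) * (θ i - η i)) := by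
    intro i
    have h1 : (1:ℝ) - η i ≠ 0 := by linarith [(hη i).2]
    rw [gradg, Real.log_div (hη i).1.ne' h1]
    ring
  have h2 : ∑ i, 2 * (θ i - η i)^2 = 2 * ∑ i, (θ i - η i)^2 := by
    rw [Finset.mul_sum]
  rw [h2] at hsum
  have hfac := mul_le_mul_of_nonneg_left hsum (by positivity : (0:ℝ) ≤ 1 / (m:ℝ))
  simp only [phi] at hfac
  simp only [hgrad, ← Finset.mul_sum, g]
  rw [mul_add, mul_add] at hfac
  have he : (2 / (m:ℝ)) * ∑ i, (θ i - η i)^2 = (1/(m:ℝ)) * (2 * ∑ i, (θ i - η i)^2) := by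
    ring
  rw [he]
  linarith

noncomputable def sig (z : ℝ) : ℝ := Real.exp (-z) / (1 + Real.exp (-z))

lemma sig_pos (z : ℝ) : 0 < sig z := by
  have := Real.exp_pos (-z)
  exact div_pos this (by linarith)

lemma sig_lt_one (z : ℝ) : sig z < 1 := by
  have := Real.exp_pos (-z)
  rw [sig, div_lt_one (by linarith)]
  linarith

lemma one_sub_sig (z : ℝ) : 1 - sig z = 1 / (1 + Real.exp (-z)) := by
  have h : (1:ℝ) + Real.exp (-z) ≠ 0 := by positivity
  rw [sig, eq_div_iff h, sub_mul, div_mul_cancel₀ _ h]; ring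

lemma log_sig_div (z : ℝ) : Real.log (sig z / (1 - sig z)) = -z := by
  rw [one_sub_sig]
  have h : (1:ℝ) + Real.exp (-z) ≠ 0 := by positivity
  have : sig z / (1 / (1 + Real.exp (-z))) = Real.exp (-z) := by
    rw [sig]; field_simp
  rw [this, Real.log_exp]

lemma hasDerivAt_logistic (a q t : ℝ) :
    HasDerivAt (fun u : ℝ => Real.log (1 + Real.exp (-(u * a) - q)))
      (-(a * sig (t * a + q))) t := by
  have hinner : HasDerivAt (fun u : ℝ => -(u * a) - q) (-a) t := by
    have h1 : HasDerivAt (fun u : ℝ => u * a) a t := by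
      simpa using (hasDerivAt_id t).mul_const a
    simpa using (h1.fun_neg).fun_sub (hasDerivAt_const t q)
  have hexp : HasDerivAt (fun u : ℝ => Real.exp (-(u * a) - q))
      (Real.exp (-(t * a) - q) * (-a)) t := (Real.hasDerivAt_exp _).comp t hinner
  have hone : HasDerivAt (fun u : ℝ => 1 + Real.exp (-(u * a) - q))
      (Real.exp (-(t * a) - q) * (-a)) t := by
    simpa using (hasDerivAt_const t (1:ℝ)).fun_add hexp
  have hpos : (0:ℝ) < 1 + Real.exp (-(t * a) - q) := by positivity
  have hlog := (Real.hasDerivAt_log hpos.ne').comp t hone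
  refine hlog.congr_deriv ?_
  rw [sig]
  have : -(t * a + q) = -(t * a) - q := by ring
  rw [this, div_eq_mul_inv]
  ring

noncomputable def thetahat (m p : ℕ) (X : Fin p → Fin m → ℝ) (b : Fin m → ℝ)
    (β : Fin p → ℝ) (c : ℝ) : Fin m → ℝ :=
  fun i => sig ((∑ j, β j * X j i) + b i * c)

lemma thetahat_mem (m p : ℕ) (X : Fin p → Fin m → ℝ) (b : Fin m → ℝ)
    (β : Fin p → ℝ) (c : ℝ) (i : Fin m) :
    0 < thetahat m p X b β c i ∧ thetahat m p X b β c i < 1 :=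
  ⟨sig_pos _, sig_lt_one _⟩

lemma kkt_b (m p : ℕ) (hm : 0 < m) (X : Fin p → Fin m → ℝ) (b : Fin m → ℝ)
    (lam : ℝ) (β : Fin p → ℝ) (c : ℝ)
    (hmin : ∀ β' c', LRP m p X b lam β c ≤ LRP m p X b lam β' c') :
    ∑ i, thetahat m p X b β c i * b i = 0 := by
  have hmR : (0:ℝ) < m := by exact_mod_cast hm
  set k : ℝ → ℝ := fun c' => LRP m p X b lam β c' with hk
  have hloc : IsLocalMin k c := Filter.Eventually.of_forall (fun c' => hmin β c')
  have hfe : ∀ i : Fin m, (fun c' : ℝ => Real.log (1 + Real.exp (-(∑ j, β j * X j i) - b i * c')))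
      = fun c' : ℝ => Real.log (1 + Real.exp (-(c' * b i) - (∑ j, β j * X j i))) := by
    intro i; funext u; ring_nf
  have hder : HasDerivAt k (-((1/(m:ℝ)) * ∑ i, thetahat m p X b β c i * b i)) c := by
    have hsum : HasDerivAt
        (fun c' : ℝ => ∑ i, Real.log (1 + Real.exp (-(c' * b i) - (∑ j, β j * X j i))))
        (∑ i, -(b i * sig (c * b i + ∑ j, β j * X j i))) c :=
      HasDerivAt.fun_sum (fun i _ => hasDerivAt_logistic (b i) (∑ j, β j * X j i) c)
    have hsum' : HasDerivAt
        (fun c' : ℝ => ∑ i, Real.log (1 + Real.exp (-(∑ j, β j * X j i) - b i * c')))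
        (∑ i, -(b i * sig (c * b i + ∑ j, β j * X j i))) c := by
      have : (fun c' : ℝ => ∑ i, Real.log (1 + Real.exp (-(∑ j, β j * X j i) - b i * c')))
          = fun c' : ℝ => ∑ i, Real.log (1 + Real.exp (-(c' * b i) - (∑ j, β j * X j i))) := by
        funext u
        exact Finset.sum_congr rfl (fun i _ => congrFun (hfe i) u)
      rw [this]
      exact hsum
    have := (hsum'.const_mul ((1:ℝ)/m)).add_const (lam * ∑ j, |β j|)
    have hkeq : k = fun c' => ((1:ℝ)/m) * (∑ i, Real.log (1 + Real.exp (-(∑ j, β j * X j i) - b i * c'))) + lam * ∑ j, |β j| := by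
      funext u; rw [hk]; rfl
    rw [hkeq]
    refine this.congr_deriv ?_
    rw [Finset.sum_neg_distrib, mul_neg, neg_inj]
    congr 1
    apply Finset.sum_congr rfl
    intro i _
    have harg : c * b i + ∑ j, β j * X j i = (∑ j, β j * X j i) + b i * c := by ring
    rw [harg]
    simp only [thetahat]
    ring
  have hzero := hloc.hasDerivAt_eq_zero hder
  have h1m : (1:ℝ)/m ≠ 0 := by positivity
  rw [neg_eq_zero, mul_eq_zero] at hzero
  rcases hzero with h | h
  · exact absurd h h1m
  · exact h

lemma kkt_beta (m p : ℕ) (hm : 0 < m) (X : Fin p → Fin m → ℝ) (b : Fin m → ℝ)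
    (lam : ℝ) (hlam : 0 < lam) (β : Fin p → ℝ) (c : ℝ)
    (hmin : ∀ β' c', LRP m p X b lam β c ≤ LRP m p X b lam β' c') (j' : Fin p) :
    |∑ i, thetahat m p X b β c i * X j' i| ≤ (m:ℝ) * lam ∧
    β j' * ∑ i, thetahat m p X b β c i * X j' i = |β j'| * ((m:ℝ) * lam) := by
  classical
  have hmR : (0:ℝ) < m := by exact_mod_cast hm
  set Q : Fin m → ℝ := fun i => (∑ j, β j * X j i) - β j' * X j' i + b i * c with hQ
  set S : ℝ → ℝ := fun t => (1/(m:ℝ)) * ∑ i, Real.log (1 + Real.exp (-(t * X j' i) - Q i))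
    with hS
  set M : ℝ := ∑ i, thetahat m p X b β c i * X j' i with hM
  set K : ℝ := lam * ((∑ j, |β j|) - |β j'|) with hK
  have hSd : ∀ t, HasDerivAt S ((1/(m:ℝ)) * ∑ i, -(X j' i * sig (t * X j' i + Q i))) t := by
    intro t
    exact (HasDerivAt.fun_sum (fun i (_ : i ∈ Finset.univ) =>
      hasDerivAt_logistic (X j' i) (Q i) t)).const_mul _
  have hSderiv : HasDerivAt S (-((1/(m:ℝ)) * M)) (β j') := by
    have h := hSd (β j')
    have heq : ((1/(m:ℝ)) * ∑ i, -(X j' i * sig (β j' * X j' i + Q i))) = -((1/(m:ℝ)) * M) := by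
      rw [Finset.sum_neg_distrib, mul_neg, neg_inj, hM]
      congr 1
      apply Finset.sum_congr rfl
      intro i _
      have harg : β j' * X j' i + Q i = (∑ j, β j * X j i) + b i * c := by rw [hQ]; ring
      rw [harg]
      simp only [thetahat]
      ring
    rwa [heq] at h
  -- LRP of updated β
  have hLRP : ∀ t, LRP m p X b lam (Function.update β j' t) c = S t + lam * |t| + K := by
    intro t
    have hsum1 : ∀ i, ∑ j, Function.update β j' t j * X j i
        = t * X j' i + ((∑ j, β j * X j i) - β j' * X j' i) := by
      intro i
      have h1 : ∑ j, (Function.update β j' t j * X j i - β j * X j i)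
          = t * X j' i - β j' * X j' i := by
        rw [Finset.sum_eq_single j']
        · rw [Function.update_self]
        · intro j _ hj; rw [Function.update_of_ne hj]; ring
        · intro h; exact absurd (Finset.mem_univ j') h
      rw [Finset.sum_sub_distrib] at h1
      linarith
    have hpen : ∑ j, |Function.update β j' t j| = |t| + ((∑ j, |β j|) - |β j'|) := by
      have h1 : ∑ j, (|Function.update β j' t j| - |β j|) = |t| - |β j'| := by
        rw [Finset.sum_eq_single j']
        · rw [Function.update_self]
        · intro j _ hj; rw [Function.update_of_ne hj]; ring
        · intro h; exact absurd (Finset.mem_univ j') h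
      rw [Finset.sum_sub_distrib] at h1
      linarith
    have hcong : ∑ i, Real.log (1 + Real.exp (-(∑ j, Function.update β j' t j * X j i) - b i * c))
        = ∑ i, Real.log (1 + Real.exp (-(t * X j' i) - Q i)) := by
      apply Finset.sum_congr rfl
      intro i _
      have : -(∑ j, Function.update β j' t j * X j i) - b i * c = -(t * X j' i) - Q i := by
        rw [hsum1 i, hQ]; ring
      rw [this]
    rw [LRP, hcong, hpen, hS, hK]
    ring
  have hglob : ∀ t, S (β j') + lam * |β j'| ≤ S t + lam * |t| := by
    intro t
    have h0 : LRP m p X b lam β c = S (β j') + lam * |β j'| + K := by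
      have h := hLRP (β j')
      rwa [Function.update_eq_self] at h
    have := hmin (Function.update β j' t) c
    rw [h0, hLRP t] at this
    linarith
  rcases lt_trichotomy (β j') 0 with hneg | hzero | hpos
  · -- M = -(m * lam)
    have hev : (fun t => S t + lam * |t|) =ᶠ[nhds (β j')] (fun t => S t + lam * (-t)) := by
      filter_upwards [eventually_lt_nhds hneg] with t ht
      rw [abs_of_neg ht]
    have hloc : IsLocalMin (fun t => S t + lam * (-t)) (β j') := by
      have h1 : IsLocalMin (fun t => S t + lam * |t|) (β j') :=
        Filter.Eventually.of_forall (fun t => hglob t)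
      exact h1.congr hev
    have hder : HasDerivAt (fun t => S t + lam * (-t)) (-((1/(m:ℝ)) * M) + lam * (-1)) (β j') := by
      have h2 : HasDerivAt (fun t : ℝ => lam * (-t)) (lam * (-1)) (β j') := by
        simpa using ((hasDerivAt_id (β j')).neg.const_mul lam)
      exact hSderiv.add h2
    have h0 := hloc.hasDerivAt_eq_zero hder
    have hMval : M = -((m:ℝ) * lam) := by
      have hm0 : (m:ℝ) ≠ 0 := hmR.ne'
      field_simp at h0
      linarith
    constructor
    · rw [hMval, abs_neg, abs_of_pos (by positivity : (0:ℝ) < (m:ℝ) * lam)]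
    · rw [hMval, abs_of_neg hneg]; ring
  · -- β j' = 0
    have hSd0 : HasDerivAt S (-((1/(m:ℝ)) * M)) 0 := hzero ▸ hSderiv
    have htend := hasDerivAt_iff_tendsto_slope.mp hSd0
    have hub : -((1/(m:ℝ)) * M) ≤ lam := by
      have hleft : Filter.Tendsto (slope S 0) (nhdsWithin 0 (Set.Iio 0)) (nhds (-((1/(m:ℝ)) * M))) :=
        htend.mono_left (nhdsWithin_mono _ (fun x hx => ne_of_lt hx))
      apply le_of_tendsto hleft
      filter_upwards [self_mem_nhdsWithin] with t ht
      have htneg : t < 0 := ht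
      have hg := hglob t
      rw [hzero] at hg
      rw [abs_zero, abs_of_neg htneg] at hg
      rw [slope_def_field]
      rw [div_le_iff_of_neg (by linarith : t - 0 < 0)]
      linarith
    have hlb : -lam ≤ -((1/(m:ℝ)) * M) := by
      have hright : Filter.Tendsto (slope S 0) (nhdsWithin 0 (Set.Ioi 0)) (nhds (-((1/(m:ℝ)) * M))) :=
        htend.mono_left (nhdsWithin_mono _ (fun x hx => ne_of_gt hx))
      apply ge_of_tendsto hright
      filter_upwards [self_mem_nhdsWithin] with t ht
      have htpos : (0:ℝ) < t := ht
      have hg := hglob t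
      rw [hzero] at hg
      rw [abs_zero, abs_of_pos htpos] at hg
      rw [slope_def_field]
      rw [le_div_iff₀ (by linarith : (0:ℝ) < t - 0)]
      linarith
    constructor
    · have : |(1/(m:ℝ)) * M| ≤ lam := by
        rw [abs_le]
        constructor <;> linarith
      rw [abs_mul, abs_of_pos (by positivity : (0:ℝ) < 1/(m:ℝ))] at this
      rw [show (m:ℝ) * lam = (m:ℝ) * lam from rfl]
      calc |M| = (m:ℝ) * ((1/(m:ℝ)) * |M|) := by field_simp
        _ ≤ (m:ℝ) * lam := by
            apply mul_le_mul_of_nonneg_left _ (le_of_lt hmR)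
            exact this
    · rw [hzero, abs_zero]; ring
  · -- M = m * lam
    have hev : (fun t => S t + lam * |t|) =ᶠ[nhds (β j')] (fun t => S t + lam * t) := by
      filter_upwards [eventually_gt_nhds hpos] with t ht
      rw [abs_of_pos ht]
    have hloc : IsLocalMin (fun t => S t + lam * t) (β j') := by
      have h1 : IsLocalMin (fun t => S t + lam * |t|) (β j') :=
        Filter.Eventually.of_forall (fun t => hglob t)
      exact h1.congr hev
    have hder : HasDerivAt (fun t => S t + lam * t) (-((1/(m:ℝ)) * M) + lam) (β j') := by
      have h2 : HasDerivAt (fun t : ℝ => lam * t) lam (β j') := by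
        simpa using ((hasDerivAt_id (β j')).const_mul lam)
      exact hSderiv.add h2
    have h0 := hloc.hasDerivAt_eq_zero hder
    have hMval : M = (m:ℝ) * lam := by
      have hm0 : (m:ℝ) ≠ 0 := hmR.ne'
      field_simp at h0
      linarith
    constructor
    · rw [hMval, abs_of_pos (by positivity : (0:ℝ) < (m:ℝ) * lam)]
    · rw [hMval, abs_of_pos hpos]

lemma dual_opt (m p : ℕ) (hm : 0 < m) (X : Fin p → Fin m → ℝ) (b : Fin m → ℝ)
    (lam : ℝ) (hlam : 0 < lam) (β : Fin p → ℝ) (c : ℝ)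
    (hmin : ∀ β' c', LRP m p X b lam β c ≤ LRP m p X b lam β' c')
    (θ : Fin m → ℝ) (hθ : θ ∈ Feas m p X b lam) :
    g m (thetahat m p X b β c) ≤ g m θ := by
  have hmR : (0:ℝ) < m := by exact_mod_cast hm
  set θh := thetahat m p X b β c with hθh
  obtain ⟨hbox, hlin, hbsum⟩ := hθ
  have hθhbox : ∀ i, 0 < θh i ∧ θh i < 1 := thetahat_mem m p X b β c
  have hlb := g_strong_lb m hm θ θh hbox hθhbox
  have hgrad : ∀ i, gradg m θh i = (1/(m:ℝ)) * (-((∑ j, β j * X j i) + b i * c)) := by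
    intro i
    rw [gradg]
    congr 1
    have h1 : θh i = sig ((∑ j, β j * X j i) + b i * c) := rfl
    rw [h1, log_sig_div]
  have hkey : 0 ≤ ∑ i, gradg m θh i * (θ i - θh i) := by
    have e1 : ∑ i, gradg m θh i * (θ i - θh i)
        = (1/(m:ℝ)) * (-(∑ i, ((∑ j, β j * X j i) + b i * c) * (θ i - θh i))) := by
      rw [← Finset.sum_neg_distrib, Finset.mul_sum]
      apply Finset.sum_congr rfl
      intro i _
      rw [hgrad i]; ring
    rw [e1]
    have e2 : ∑ i, ((∑ j, β j * X j i) + b i * c) * (θ i - θh i)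
        = (∑ j, β j * ((∑ i, θ i * X j i) - ∑ i, θh i * X j i))
          + c * ((∑ i, θ i * b i) - ∑ i, θh i * b i) := by
      have l1 : ∑ i, ((∑ j, β j * X j i) + b i * c) * (θ i - θh i)
          = (∑ i, ∑ j, β j * X j i * (θ i - θh i)) + ∑ i, b i * c * (θ i - θh i) := by
        rw [← Finset.sum_add_distrib]
        apply Finset.sum_congr rfl
        intro i _
        rw [add_mul, Finset.sum_mul]
      rw [l1, Finset.sum_comm]
      congr 1
      · apply Finset.sum_congr rfl
        intro j _
        have h3 : ∀ i : Fin m, β j * X j i * (θ i - θh i)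
            = β j * (θ i * X j i - θh i * X j i) := fun i => by ring
        rw [Finset.sum_congr rfl (fun i _ => h3 i), ← Finset.mul_sum, Finset.sum_sub_distrib]
      · have h3 : ∀ i : Fin m, b i * c * (θ i - θh i)
            = c * (θ i * b i - θh i * b i) := fun i => by ring
        rw [Finset.sum_congr rfl (fun i _ => h3 i), ← Finset.mul_sum, Finset.sum_sub_distrib]
    rw [e2, hbsum, kkt_b m p hm X b lam β c hmin]
    have hterm : ∀ j' ∈ Finset.univ, β j' * ((∑ i, θ i * X j' i) - ∑ i, θh i * X j' i) ≤ 0 := by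
      intro j' _
      have h2 := (kkt_beta m p hm X b lam hlam β c hmin j').2
      have h3 : β j' * ∑ i, θ i * X j' i ≤ |β j'| * ((m:ℝ) * lam) := by
        calc β j' * ∑ i, θ i * X j' i ≤ |β j' * ∑ i, θ i * X j' i| := le_abs_self _
          _ = |β j'| * |∑ i, θ i * X j' i| := abs_mul _ _
          _ ≤ |β j'| * ((m:ℝ) * lam) := mul_le_mul_of_nonneg_left (hlin j') (abs_nonneg _)
      rw [mul_sub, h2]
      linarith
    have hsumle : (∑ j', β j' * ((∑ i, θ i * X j' i) - ∑ i, θh i * X j' i)) ≤ 0 :=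
      Finset.sum_nonpos hterm
    have : (0:ℝ) ≤ -((∑ j', β j' * ((∑ i, θ i * X j' i) - ∑ i, θh i * X j' i))
        + c * (0 - 0)) := by
      simp only [sub_zero, mul_zero]
      linarith
    apply mul_nonneg (by positivity) this
  have hsq : (0:ℝ) ≤ (2/(m:ℝ)) * ∑ i, (θ i - θh i)^2 := by
    apply mul_nonneg (by positivity)
    exact Finset.sum_nonneg (fun i _ => sq_nonneg _)
  linarith

lemma vi_ineq (m p : ℕ) (hm : 0 < m) (X : Fin p → Fin m → ℝ) (b : Fin m → ℝ)
    (lam₀ : ℝ) (θ₀ : Fin m → ℝ)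
    (hopt : θ₀ ∈ Feas m p X b lam₀ ∧ ∀ θ ∈ Feas m p X b lam₀, g m θ₀ ≤ g m θ)
    (d : Fin m → ℝ)
    (hfeas : ∀ᶠ t in nhdsWithin (0:ℝ) (Set.Ioi 0),
      (fun i => θ₀ i + t * d i) ∈ Feas m p X b lam₀) :
    0 ≤ ∑ i, gradg m θ₀ i * d i := by
  have hbox := hopt.1.1
  set G : ℝ → ℝ := fun t => g m (fun i => θ₀ i + t * d i) with hG
  have hGd : HasDerivAt G (∑ i, gradg m θ₀ i * d i) 0 := by
    have hsum : HasDerivAt (fun t : ℝ => ∑ i, phi (θ₀ i + t * d i))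
        (∑ i, (Real.log (θ₀ i) - Real.log (1 - θ₀ i)) * d i) 0 := by
      apply HasDerivAt.fun_sum
      intro i _
      have hin : HasDerivAt (fun t : ℝ => θ₀ i + t * d i) (d i) 0 := by
        simpa using (hasDerivAt_const (0:ℝ) (θ₀ i)).fun_add ((hasDerivAt_id (0:ℝ)).mul_const (d i))
      have hφ : HasDerivAt phi (Real.log (θ₀ i) - Real.log (1 - θ₀ i)) (θ₀ i + 0 * d i) := by
        have h0 : θ₀ i + 0 * d i = θ₀ i := by ring
        rw [h0]
        exact phi_hasDerivAt (hbox i).1 (hbox i).2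
      have := hφ.comp 0 hin
      exact this
    have := hsum.const_mul ((1:ℝ)/m)
    have heq : G = fun t => ((1:ℝ)/m) * ∑ i, phi (θ₀ i + t * d i) := by
      funext t; simp only [hG, g, phi]
    rw [heq]
    have hval : ((1:ℝ)/m) * ∑ i, (Real.log (θ₀ i) - Real.log (1 - θ₀ i)) * d i
        = ∑ i, gradg m θ₀ i * d i := by
      rw [Finset.mul_sum]
      apply Finset.sum_congr rfl
      intro i _
      rw [gradg, Real.log_div (hbox i).1.ne'
        (by linarith [(hbox i).2] : (1:ℝ) - θ₀ i ≠ 0)]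
      ring
    rw [← hval]
    exact this
  have htend := hasDerivAt_iff_tendsto_slope.mp hGd
  have hright : Filter.Tendsto (slope G 0) (nhdsWithin 0 (Set.Ioi 0))
      (nhds (∑ i, gradg m θ₀ i * d i)) :=
    htend.mono_left (nhdsWithin_mono _ (fun x hx => ne_of_gt hx))
  apply ge_of_tendsto hright
  filter_upwards [hfeas, self_mem_nhdsWithin] with t htf htpos
  have hG0 : G 0 = g m θ₀ := by
    have h0 : (fun i => θ₀ i + 0 * d i) = θ₀ := by funext i; ring
    show g m (fun i => θ₀ i + 0 * d i) = g m θ₀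
    rw [h0]
  have hGt : g m θ₀ ≤ G t := hopt.2 _ htf
  rw [slope_def_field, le_div_iff₀ (by simpa using htpos : (0:ℝ) < t - 0)]
  rw [hG0] at *
  linarith [hGt]

theorem slores_screening_rule
 (m p : ℕ) (hm : 1 ≤ m) (hp : 1 ≤ p)
    (X : Fin p → Fin m → ℝ) (b : Fin m → ℝ) (hb : ∀ i, b i = 1 ∨ b i = -1)
    (hmp : 1 ≤ mPlus m b) (hmm : 1 ≤ mMinus m b) (hlmax : 0 < lamMax m p X b)
    (lam lam₀ : ℝ) (hlam : 0 < lam) (hll : lam < lam₀) (hle : lam₀ ≤ lamMax m p X b)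
    (θ₀ : Fin m → ℝ)
    (hθ₀ : θ₀ ∈ Feas m p X b lam₀ ∧ ∀ θ ∈ Feas m p X b lam₀, g m θ₀ ≤ g m θ)
    (r : ℝ)
    (hr : r = Real.sqrt (((m : ℝ) / 2) * (g m (fun i => (lam / lam₀) * θ₀ i) - g m θ₀
      + (1 - lam / lam₀) * ∑ i, gradg m θ₀ i * θ₀ i)))
    (j₀ : Fin p) (hj₀ : |∑ i, θ₀ i * X j₀ i| = (m : ℝ) * lam₀)
    (xstar : Fin m → ℝ)
    (hxstar : xstar = fun i => Real.sign (∑ k, θ₀ k * X j₀ k) * X j₀ i)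
    (A : Set (Fin m → ℝ))
    (hA : A = {θ | ∑ i, (θ i - θ₀ i) ^ 2 ≤ r ^ 2 ∧ ∑ i, θ i * b i = 0 ∧
      ∑ i, θ i * xstar i ≤ (m : ℝ) * lam})
    (j : Fin p)
    (hscreen : Pb m b (X j) = 0 ∨
      sSup ((fun θ => |∑ i, θ i * X j i|) '' A) < (m : ℝ) * lam)
    (β : Fin p → ℝ) (c : ℝ)
    (hmin : ∀ β' c', LRP m p X b lam β c ≤ LRP m p X b lam β' c') :
    β j = 0 := by
  classical
  have hm0 : 0 < m := hm
  have hmR : (0:ℝ) < m := by exact_mod_cast hm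
  have hlam₀ : 0 < lam₀ := lt_trans hlam hll
  rcases hscreen with hP | hsup
  · -- Case (a): X j is a multiple of b
    set tt : ℝ := (∑ k, X j k * b k) / (∑ k, (b k)^2) with htt
    have hXj : ∀ i, X j i = tt * b i := by
      intro i
      have h := congrFun hP i
      simp only [Pb, Pi.zero_apply] at h
      linarith [h]
    set β' := Function.update β j 0 with hβ'
    set c' := c + β j * tt with hc'
    have hsumβ' : ∀ i, ∑ j', β' j' * X j' i = (∑ j', β j' * X j' i) - β j * X j i := by
      intro i
      have h1 : ∑ j', (β' j' * X j' i - β j' * X j' i) = 0 * X j i - β j * X j i := by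
        rw [Finset.sum_eq_single j]
        · rw [hβ', Function.update_self]
        · intro j' _ hj'; rw [hβ', Function.update_of_ne hj']; ring
        · intro h; exact absurd (Finset.mem_univ j) h
      rw [Finset.sum_sub_distrib] at h1
      have : (0:ℝ) * X j i - β j * X j i = -(β j * X j i) := by ring
      rw [this] at h1
      linarith
    have hpenβ' : ∑ j', |β' j'| = (∑ j', |β j'|) - |β j| := by
      have h1 : ∑ j', (|β' j'| - |β j'|) = |(0:ℝ)| - |β j| := by
        rw [Finset.sum_eq_single j]
        · rw [hβ', Function.update_self]
        · intro j' _ hj'; rw [hβ', Function.update_of_ne hj']; ring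
        · intro h; exact absurd (Finset.mem_univ j) h
      rw [Finset.sum_sub_distrib, abs_zero] at h1
      linarith
    have hloss : ∀ i, -(∑ j', β' j' * X j' i) - b i * c' = -(∑ j', β j' * X j' i) - b i * c := by
      intro i
      rw [hsumβ', hXj i, hc']
      ring
    have hLRPeq : LRP m p X b lam β' c' = LRP m p X b lam β c - lam * |β j| := by
      rw [LRP, LRP, hpenβ']
      have : ∑ i, Real.log (1 + Real.exp (-(∑ j', β' j' * X j' i) - b i * c'))
          = ∑ i, Real.log (1 + Real.exp (-(∑ j', β j' * X j' i) - b i * c)) := by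
        apply Finset.sum_congr rfl
        intro i _
        rw [hloss i]
      rw [this]
      ring
    have := hmin β' c'
    rw [hLRPeq] at this
    have habs : lam * |β j| ≤ 0 := by linarith
    have : |β j| ≤ 0 := by
      by_contra habs2
      push_neg at habs2
      nlinarith
    exact abs_eq_zero.mp (le_antisymm this (abs_nonneg _))
  · -- Case (b)
    set θh := thetahat m p X b β c with hθh
    have hθhbox : ∀ i, 0 < θh i ∧ θh i < 1 := thetahat_mem m p X b β c
    have hkkt := fun j' => kkt_beta m p hm0 X b lam hlam β c hmin j'
    have hkb : ∑ i, θh i * b i = 0 := kkt_b m p hm0 X b lam β c hmin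
    have hθhfeas : θh ∈ Feas m p X b lam :=
      ⟨hθhbox, fun j' => (hkkt j').1, hkb⟩
    have hlamne : lam ≠ 0 := hlam.ne'
    have hlam₀ne : lam₀ ≠ 0 := hlam₀.ne'
    have hratpos : 0 < lam / lam₀ := div_pos hlam hlam₀
    have hratlt : lam / lam₀ < 1 := (div_lt_one hlam₀).mpr hll
    set θs : Fin m → ℝ := fun i => (lam / lam₀) * θ₀ i with hθs
    obtain ⟨⟨hb0, hl0, hs0⟩, hopt0⟩ := hθ₀
    -- θs feasible for lam
    have hθsfeas : θs ∈ Feas m p X b lam := by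
      refine ⟨?_, ?_, ?_⟩
      · intro i
        constructor
        · exact mul_pos hratpos (hb0 i).1
        · show lam / lam₀ * θ₀ i < 1
          nlinarith [(hb0 i).1, (hb0 i).2]
      · intro j'
        have hsum : ∑ i, θs i * X j' i = (lam/lam₀) * ∑ i, θ₀ i * X j' i := by
          rw [Finset.mul_sum]
          exact Finset.sum_congr rfl (fun i _ => by simp only [hθs]; ring)
        rw [hsum, abs_mul, abs_of_pos hratpos]
        calc (lam/lam₀) * |∑ i, θ₀ i * X j' i| ≤ (lam/lam₀) * ((m:ℝ) * lam₀) :=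
              mul_le_mul_of_nonneg_left (hl0 j') (le_of_lt hratpos)
          _ = (m:ℝ) * lam := by field_simp
      · have hsum : ∑ i, θs i * b i = (lam/lam₀) * ∑ i, θ₀ i * b i := by
          rw [Finset.mul_sum]
          exact Finset.sum_congr rfl (fun i _ => by simp only [hθs]; ring)
        rw [hsum, hs0, mul_zero]
    -- VI
    set d : Fin m → ℝ := fun i => (lam₀ / lam) * θh i - θ₀ i with hd
    have hVI : 0 ≤ ∑ i, gradg m θ₀ i * d i := by
      apply vi_ineq m p hm0 X b lam₀ θ₀ ⟨⟨hb0, hl0, hs0⟩, hopt0⟩ d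
      -- eventual feasibility
      have hboxev : ∀ᶠ t in nhds (0:ℝ), ∀ i, θ₀ i + t * d i ∈ Set.Ioo (0:ℝ) 1 := by
        rw [Filter.eventually_all]
        intro i
        have hc : ContinuousAt (fun t : ℝ => θ₀ i + t * d i) 0 := by
          apply ContinuousAt.add continuousAt_const
          exact (continuousAt_id.mul continuousAt_const)
        apply hc.eventually_mem
        have h0 : θ₀ i + 0 * d i = θ₀ i := by ring
        rw [h0]
        exact Ioo_mem_nhds (hb0 i).1 (hb0 i).2
      have hb1 : ∀ᶠ t in nhdsWithin (0:ℝ) (Set.Ioi 0), ∀ i, θ₀ i + t * d i ∈ Set.Ioo (0:ℝ) 1 :=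
        hboxev.filter_mono nhdsWithin_le_nhds
      have ht1 : ∀ᶠ t in nhdsWithin (0:ℝ) (Set.Ioi 0), t < 1 :=
        (eventually_lt_nhds one_pos).filter_mono nhdsWithin_le_nhds
      filter_upwards [hb1, ht1, self_mem_nhdsWithin] with t hbt ht1' htpos
      have htpos' : (0:ℝ) < t := htpos
      refine ⟨fun i => ⟨(hbt i).1, (hbt i).2⟩, ?_, ?_⟩
      · intro j'
        have hexp : ∑ i, (θ₀ i + t * d i) * X j' i
            = (1 - t) * (∑ i, θ₀ i * X j' i) + (t * (lam₀/lam)) * ∑ i, θh i * X j' i := by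
          have e1 : ∀ i : Fin m, (θ₀ i + t * d i) * X j' i
              = (1 - t) * (θ₀ i * X j' i) + (t * (lam₀/lam)) * (θh i * X j' i) := by
            intro i; simp only [hd]; ring
          rw [Finset.sum_congr rfl (fun i _ => e1 i), Finset.sum_add_distrib,
            ← Finset.mul_sum, ← Finset.mul_sum]
        rw [hexp]
        have h1 := hl0 j'
        have h2 := (hkkt j').1
        have hta : (0:ℝ) ≤ 1 - t := by linarith
        have htb : (0:ℝ) ≤ t * (lam₀/lam) := by positivity
        calc |(1 - t) * (∑ i, θ₀ i * X j' i) + (t * (lam₀/lam)) * ∑ i, θh i * X j' i|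
            ≤ |(1 - t) * (∑ i, θ₀ i * X j' i)| + |(t * (lam₀/lam)) * ∑ i, θh i * X j' i| :=
              abs_add_le _ _
          _ = (1 - t) * |∑ i, θ₀ i * X j' i| + (t * (lam₀/lam)) * |∑ i, θh i * X j' i| := by
              rw [abs_mul, abs_mul, abs_of_nonneg hta, abs_of_nonneg htb]
          _ ≤ (1 - t) * ((m:ℝ) * lam₀) + (t * (lam₀/lam)) * ((m:ℝ) * lam) :=
              add_le_add (mul_le_mul_of_nonneg_left h1 hta)
                (mul_le_mul_of_nonneg_left h2 htb)
          _ = (m:ℝ) * lam₀ := by field_simp; ring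
      · have hexp : ∑ i, (θ₀ i + t * d i) * b i
            = (1 - t) * (∑ i, θ₀ i * b i) + (t * (lam₀/lam)) * ∑ i, θh i * b i := by
          have e1 : ∀ i : Fin m, (θ₀ i + t * d i) * b i
              = (1 - t) * (θ₀ i * b i) + (t * (lam₀/lam)) * (θh i * b i) := by
            intro i; simp only [hd]; ring
          rw [Finset.sum_congr rfl (fun i _ => e1 i), Finset.sum_add_distrib,
            ← Finset.mul_sum, ← Finset.mul_sum]
        rw [hexp, hs0, hkb]
        ring
    -- sums notation
    set T0 : ℝ := ∑ i, gradg m θ₀ i * θ₀ i with hT0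
    set T1 : ℝ := ∑ i, gradg m θ₀ i * θh i with hT1
    have hVI' : (lam/lam₀) * T0 ≤ T1 := by
      have he : ∑ i, gradg m θ₀ i * d i = (lam₀/lam) * T1 - T0 := by
        have e1 : ∀ i : Fin m, gradg m θ₀ i * d i
            = (lam₀/lam) * (gradg m θ₀ i * θh i) - gradg m θ₀ i * θ₀ i := by
          intro i; simp only [hd]; ring
        rw [Finset.sum_congr rfl (fun i _ => e1 i), Finset.sum_sub_distrib, ← Finset.mul_sum]
      rw [he] at hVI
      have := mul_nonneg (le_of_lt hratpos) hVI
      have heq : (lam/lam₀) * ((lam₀/lam) * T1 - T0) = T1 - (lam/lam₀) * T0 := by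
        field_simp
      rw [heq] at this
      linarith
    -- strong convexity chain
    have hlb := g_strong_lb m hm0 θh θ₀ hθhbox hb0
    have hgs : g m θh ≤ g m θs := dual_opt m p hm0 X b lam hlam β c hmin θs hθsfeas
    have hsub : ∑ i, gradg m θ₀ i * (θh i - θ₀ i) = T1 - T0 := by
      have e1 : ∀ i : Fin m, gradg m θ₀ i * (θh i - θ₀ i)
          = gradg m θ₀ i * θh i - gradg m θ₀ i * θ₀ i := fun i => by ring
      rw [Finset.sum_congr rfl (fun i _ => e1 i), Finset.sum_sub_distrib]
    rw [hsub] at hlb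
    set E : ℝ := ((m:ℝ)/2) * (g m θs - g m θ₀ + (1 - lam/lam₀) * T0) with hE
    have hΔE : ∑ i, (θh i - θ₀ i)^2 ≤ E := by
      have h1 : (2/(m:ℝ)) * ∑ i, (θh i - θ₀ i)^2
          ≤ g m θs - g m θ₀ + (1 - lam/lam₀) * T0 := by
        nlinarith [hlb, hgs, hVI']
      have h2 := mul_le_mul_of_nonneg_left h1 (by positivity : (0:ℝ) ≤ (m:ℝ)/2)
      have h3 : ((m:ℝ)/2) * ((2/(m:ℝ)) * ∑ i, (θh i - θ₀ i)^2) = ∑ i, (θh i - θ₀ i)^2 := by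
        field_simp
      rw [h3] at h2
      rw [hE]
      exact h2
    have hE0 : 0 ≤ E :=
      le_trans (Finset.sum_nonneg (fun i _ => sq_nonneg _)) hΔE
    have hr2 : r^2 = E := by
      rw [hr, hE, hT0]
      refine Real.sq_sqrt ?_
      rw [hE, hT0] at hE0
      exact hE0
    -- θh ∈ A
    have hθhA : θh ∈ A := by
      rw [hA]
      refine ⟨by rw [hr2]; exact hΔE, hkb, ?_⟩
      rw [hxstar]
      have hsgn : |Real.sign (∑ k, θ₀ k * X j₀ k)| ≤ 1 := by
        rcases Real.sign_apply_eq (∑ k, θ₀ k * X j₀ k) with h | h | h <;> rw [h] <;> norm_num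
      have hexp : ∑ i, θh i * (Real.sign (∑ k, θ₀ k * X j₀ k) * X j₀ i)
          = Real.sign (∑ k, θ₀ k * X j₀ k) * ∑ i, θh i * X j₀ i := by
        rw [Finset.mul_sum]
        exact Finset.sum_congr rfl (fun i _ => by ring)
      rw [hexp]
      calc Real.sign (∑ k, θ₀ k * X j₀ k) * ∑ i, θh i * X j₀ i
          ≤ |Real.sign (∑ k, θ₀ k * X j₀ k) * ∑ i, θh i * X j₀ i| := le_abs_self _
        _ = |Real.sign (∑ k, θ₀ k * X j₀ k)| * |∑ i, θh i * X j₀ i| := abs_mul _ _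
        _ ≤ 1 * ((m:ℝ) * lam) := by
            apply mul_le_mul hsgn (hkkt j₀).1 (abs_nonneg _) zero_le_one
        _ = (m:ℝ) * lam := one_mul _
    -- bounded above
    have hBdd : BddAbove ((fun θ => |∑ i, θ i * X j i|) '' A) := by
      refine ⟨(m:ℝ)*lam₀ + Real.sqrt (r^2 * ∑ i, (X j i)^2), ?_⟩
      rintro y ⟨θ, hθA, rfl⟩
      rw [hA] at hθA
      obtain ⟨hball, hbs, hxs⟩ := hθA
      have hsplit : ∑ i, θ i * X j i
          = (∑ i, θ₀ i * X j i) + ∑ i, (θ i - θ₀ i) * X j i := by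
        rw [← Finset.sum_add_distrib]
        exact Finset.sum_congr rfl (fun i _ => by ring)
      have hCS : |∑ i, (θ i - θ₀ i) * X j i| ≤ Real.sqrt (r^2 * ∑ i, (X j i)^2) := by
        rw [← Real.sqrt_sq_eq_abs]
        apply Real.sqrt_le_sqrt
        calc (∑ i, (θ i - θ₀ i) * X j i)^2
            ≤ (∑ i, (θ i - θ₀ i)^2) * ∑ i, (X j i)^2 :=
              Finset.sum_mul_sq_le_sq_mul_sq _ _ _
          _ ≤ r^2 * ∑ i, (X j i)^2 := by
              apply mul_le_mul_of_nonneg_right hball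
              exact Finset.sum_nonneg (fun i _ => sq_nonneg _)
      calc |∑ i, θ i * X j i|
          ≤ |∑ i, θ₀ i * X j i| + |∑ i, (θ i - θ₀ i) * X j i| := by
            rw [hsplit]; exact abs_add_le _ _
        _ ≤ (m:ℝ)*lam₀ + Real.sqrt (r^2 * ∑ i, (X j i)^2) :=
            add_le_add (hl0 j) hCS
    have hmem : |∑ i, θh i * X j i| ∈ ((fun θ => |∑ i, θ i * X j i|) '' A) :=
      ⟨θh, hθhA, rfl⟩
    have hlt : |∑ i, θh i * X j i| < (m:ℝ) * lam :=
      lt_of_le_of_lt (le_csSup hBdd hmem) hsup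
    by_contra hbj
    have heq2 := (hkkt j).2
    have habs := congrArg abs heq2
    rw [abs_mul, abs_mul, abs_abs, abs_of_pos (by positivity : (0:ℝ) < (m:ℝ)*lam)] at habs
    have hMeq : |∑ i, θh i * X j i| = (m:ℝ) * lam :=
      mul_left_cancel₀ (abs_ne_zero.mpr hbj) habs
    linarith
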